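/- arXiv:2002.05507 — 2 statements merged into one kernel-verified Lean document; each statement's English description precedes it below -/
import Mathlib

section
/- Let X be a finite-dimensional real inner product space, C a closed convex pointed generating cone in X, and e ∈ X such that B_e = {z ∈ C : ⟨e, z⟩ = 1} is a base of C. Then e lies in the interior of the dual cone C*. -/
open scoped RealInnerProductSpace

theorem stmt_1 {X : Type*} [NormedAddCommGroup X] [InnerProductSpace ℝ X]
    [FiniteDimensional ℝ X] (C : Set X)
    (hclosed : IsClosed C) (hconv : Convex ℝ C)
    (hcone : ∀ z ∈ C, ∀ t : ℝ, 0 ≤ t → t • z ∈ C)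
    (hpointed : C ∩ (-C) = {0})
    (hgen : ∀ x : X, ∃ u ∈ C, ∃ w ∈ C, x = u - w)
    (e : X)
    (hcompact : IsCompact {z ∈ C | ⟪e, z⟫ = 1})
    (hbconv : Convex ℝ {z ∈ C | ⟪e, z⟫ = 1})
    (hrep : ∀ z ∈ C, z ≠ 0 →
      ∃! p : ℝ × X, 0 < p.1 ∧ p.2 ∈ {z ∈ C | ⟪e, z⟫ = 1} ∧ z = p.1 • p.2) :
    e ∈ interior {f : X | ∀ z ∈ C, 0 ≤ ⟪f, z⟫} := by
  obtain ⟨M, hM⟩ := hcompact.isBounded.exists_norm_le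
  set M' : ℝ := max M 0 with hM'
  have hM'nn : 0 ≤ M' := le_max_right _ _
  have hM'pos : (0:ℝ) < M' + 1 := by linarith
  have hball : Metric.ball e (1 / (M' + 1)) ⊆ {f : X | ∀ z ∈ C, 0 ≤ ⟪f, z⟫} := by
    intro f hf z hz
    rcases eq_or_ne z 0 with rfl | hz0
    · simp
    · obtain ⟨⟨t, b⟩, ⟨ht, hbB, hzb⟩, -⟩ := hrep z hz hz0
      have hbC : b ∈ C := hbB.1
      have hbe : ⟪e, b⟫ = 1 := hbB.2
      have hbn : ‖b‖ ≤ M' := le_trans (hM b hbB) (le_max_left _ _)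
      have hfe : ‖e - f‖ < 1 / (M' + 1) := by
        rw [Metric.mem_ball, dist_comm] at hf
        simpa [dist_eq_norm] using hf
      have h1 : ⟪e - f, b⟫ ≤ ‖e - f‖ * ‖b‖ := real_inner_le_norm _ _
      have h2 : ‖e - f‖ * ‖b‖ < 1 := by
        calc ‖e - f‖ * ‖b‖ ≤ ‖e - f‖ * M' :=
              mul_le_mul_of_nonneg_left hbn (norm_nonneg _)
          _ < (1 / (M' + 1)) * (M' + 1) := by
              apply mul_lt_mul' (le_of_lt hfe) (by linarith) hM'nn
              positivity
          _ = 1 := by field_simp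
      have hfb : 0 < ⟪f, b⟫ := by
        have : ⟪e - f, b⟫ = 1 - ⟪f, b⟫ := by
          rw [inner_sub_left, hbe]
        linarith
      have : ⟪f, z⟫ = t * ⟪f, b⟫ := by
        rw [hzb, real_inner_smul_right]
      rw [this]
      positivity
  exact interior_maximal hball Metric.isOpen_ball (Metric.mem_ball_self (by positivity))
end

section
/- The linear span of the set of Choi matrices of quantum channels from L(ℂ^{d_X}) to L(ℂ^{d_Y}) equals S = {M ∈ Herm(ℂ^{d_Y} ⊗ ℂ^{d_X}) : Tr_Y(M) = c·I_X for some c ∈ ℝ}; in particular, this span has dimension d_X² d_Y² − d_X² + 1 and is the smallest real linear subspace containing all such Choi matrices. -/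
open Matrix
open scoped Kronecker ComplexOrder

/-- Partial trace over the `ℂ^{d_Y}` (first) tensor factor. -/
noncomputable def ptraceY (dX dY : ℕ) (M : Matrix (Fin dY × Fin dX) (Fin dY × Fin dX) ℂ) :
    Matrix (Fin dX) (Fin dX) ℂ :=
  Matrix.of fun i j => ∑ k : Fin dY, M (k, i) (k, j)

open Module

variable {ι : Type*} [Fintype ι] [DecidableEq ι]

/-- Hermitian matrices as a real submodule. -/
noncomputable def hermSub (ι : Type*) [Fintype ι] : Submodule ℝ (Matrix ι ι ℂ) where
  carrier := {M | M.IsHermitian}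
  add_mem' := fun h1 h2 => h1.add h2
  zero_mem' := isHermitian_zero
  smul_mem' := fun c M h => by
    change (c • M)ᴴ = c • M
    rw [conjTranspose_smul, star_trivial, h]

noncomputable def tι (ι : Type*) [Fintype ι] : ι → ℕ := fun i => (Fintype.equivFin ι i : ℕ)

lemma tι_inj {ι : Type*} [Fintype ι] {i j : ι} (h : tι ι i = tι ι j) : i = j :=
  (Fintype.equivFin ι).injective (Fin.val_injective h)

noncomputable def realifyF : hermSub ι →ₗ[ℝ] Matrix ι ι ℝ where
  toFun M := of fun i j => if tι ι i ≤ tι ι j then (M.1 i j).re else (M.1 i j).im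
  map_add' M N := by
    ext i j
    simp only [of_apply, Matrix.add_apply, Submodule.coe_add, Matrix.add_apply]
    split_ifs <;> simp
  map_smul' r M := by
    ext i j
    simp only [of_apply, Matrix.smul_apply, SetLike.val_smul, RingHom.id_apply, smul_eq_mul]
    split_ifs <;> simp [Complex.real_smul, Complex.mul_re, Complex.mul_im]

noncomputable def realifyG : Matrix ι ι ℝ →ₗ[ℝ] Matrix ι ι ℂ where
  toFun A := of fun i j =>
    if tι ι i < tι ι j then (A i j : ℂ) - A j i * Complex.I
    else if tι ι j < tι ι i then (A j i : ℂ) + A i j * Complex.I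
    else (A i j : ℂ)
  map_add' A B := by
    ext i j
    simp only [of_apply, Matrix.add_apply]
    split_ifs <;> push_cast <;> ring
  map_smul' r A := by
    ext i j
    simp only [of_apply, Matrix.smul_apply, RingHom.id_apply, smul_eq_mul]
    split_ifs <;> simp [Complex.real_smul] <;> push_cast <;> ring

lemma realifyG_herm (A : Matrix ι ι ℝ) : (realifyG (ι := ι) A).IsHermitian := by
  ext i j
  simp only [realifyG, LinearMap.coe_mk, AddHom.coe_mk, conjTranspose_apply, of_apply]
  rcases lt_trichotomy (tι ι i) (tι ι j) with h | h | h
  · simp only [if_pos h, if_neg h.not_gt, if_neg (lt_irrefl _)]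
    simp [Complex.ext_iff]
  · obtain rfl : i = j := tι_inj h
    simp [Complex.conj_ofReal]
  · simp only [if_pos h, if_neg h.not_gt, if_neg (lt_irrefl _)]
    simp [Complex.ext_iff]

noncomputable def realifyG' : Matrix ι ι ℝ →ₗ[ℝ] hermSub ι :=
  (realifyG (ι := ι)).codRestrict (hermSub ι) realifyG_herm

lemma gf (M : hermSub ι) : realifyG' (realifyF M) = M := by
  have hM : (M : Matrix ι ι ℂ).IsHermitian := M.2
  apply Subtype.ext
  ext i j
  simp only [realifyG', realifyG, realifyF, LinearMap.codRestrict_apply, LinearMap.coe_mk,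
    AddHom.coe_mk, of_apply]
  rcases lt_trichotomy (tι ι i) (tι ι j) with h | h | h
  · have him : (M.1 j i).im = -(M.1 i j).im := by rw [← hM.apply i j]; simp
    rw [if_pos h, if_pos h.le, if_neg (by omega), him]
    simp [Complex.ext_iff]
  · obtain rfl : i = j := tι_inj h
    have : ((M.1 i i).re : ℂ) = M.1 i i := Complex.conj_eq_iff_re.mp (hM.apply i i)
    simp [this]
  · have hre : (M.1 j i).re = (M.1 i j).re := by rw [← hM.apply i j]; simp
    rw [if_neg h.not_gt, if_pos h, if_pos h.le, if_neg (not_le.mpr h), hre]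
    simp [Complex.ext_iff]

lemma fg (A : Matrix ι ι ℝ) : realifyF (realifyG' (ι := ι) A) = A := by
  ext i j
  simp only [realifyG', realifyG, realifyF, LinearMap.codRestrict_apply, LinearMap.coe_mk,
    AddHom.coe_mk, of_apply]
  rcases lt_trichotomy (tι ι i) (tι ι j) with h | h | h
  · rw [if_pos h.le, if_pos h]; simp
  · obtain rfl : i = j := tι_inj h
    simp
  · rw [if_neg (not_le.mpr h), if_neg h.not_gt, if_pos h]; simp

noncomputable def hermEquiv (ι : Type*) [Fintype ι] [DecidableEq ι] :
    hermSub ι ≃ₗ[ℝ] Matrix ι ι ℝ :=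
  LinearEquiv.ofLinear realifyF realifyG' (by ext A : 1; exact fg A) (by ext M : 1; exact gf M)

lemma finrank_hermSub (ι : Type*) [Fintype ι] [DecidableEq ι] :
    finrank ℝ (hermSub ι) = Fintype.card ι * Fintype.card ι := by
  rw [(hermEquiv ι).finrank_eq]
  simp [finrank_matrix]

section Helpers

variable {dX dY : ℕ}

lemma ptraceY_add (M N : Matrix (Fin dY × Fin dX) (Fin dY × Fin dX) ℂ) :
    ptraceY dX dY (M + N) = ptraceY dX dY M + ptraceY dX dY N := by
  ext i j; simp [ptraceY, Finset.sum_add_distrib]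

lemma ptraceY_csmul (z : ℂ) (M : Matrix (Fin dY × Fin dX) (Fin dY × Fin dX) ℂ) :
    ptraceY dX dY (z • M) = z • ptraceY dX dY M := by
  ext i j; simp [ptraceY, Finset.mul_sum]

lemma ptraceY_herm {M : Matrix (Fin dY × Fin dX) (Fin dY × Fin dX) ℂ} (hM : M.IsHermitian) :
    (ptraceY dX dY M).IsHermitian := by
  ext i j
  simp only [ptraceY, conjTranspose_apply, of_apply, star_sum]
  exact Finset.sum_congr rfl fun k _ => hM.apply (k, i) (k, j)

lemma ptraceY_smul_one (z : ℂ) :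
    ptraceY dX dY (z • 1) = ((dY : ℂ) * z) • 1 := by
  ext i j
  simp only [ptraceY, of_apply, Matrix.smul_apply, Matrix.one_apply, smul_eq_mul, mul_ite,
    mul_one, mul_zero, Prod.mk.injEq]
  by_cases h : i = j
  · simp [h, Finset.sum_const, mul_comm]
  · simp [h]

lemma smul_psd {n : Type*} [Fintype n] {A : Matrix n n ℂ} (hA : A.PosSemidef) {r : ℝ}
    (hr : 0 ≤ r) : ((r : ℂ) • A).PosSemidef := by
  constructor
  · have h1 := hA.1
    change _ᴴ = _
    have hstar : star ((r : ℝ) : ℂ) = ((r : ℝ) : ℂ) := by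
      simp [Complex.conj_ofReal]
    rw [conjTranspose_smul, h1, hstar]
  · intro x
    exact (hA.smul (Complex.zero_le_real.mpr hr)).2 x

lemma herm_shift_psd {n : Type*} [Fintype n] [DecidableEq n] {M : Matrix n n ℂ}
    (hM : M.IsHermitian) {s : ℝ} (hs : ∀ i, -s ≤ hM.eigenvalues i) :
    (M + (s : ℂ) • 1).PosSemidef := by
  have hU : (hM.eigenvectorUnitary : Matrix n n ℂ) *
      star (hM.eigenvectorUnitary : Matrix n n ℂ) = 1 :=
    Matrix.mem_unitaryGroup_iff.mp hM.eigenvectorUnitary.2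
  have key : M + (s : ℂ) • 1 =
      (hM.eigenvectorUnitary : Matrix n n ℂ) *
        diagonal (fun i => ((hM.eigenvalues i + s : ℝ) : ℂ)) *
        ((hM.eigenvectorUnitary : Matrix n n ℂ))ᴴ := by
    have hd : (diagonal (fun i => ((hM.eigenvalues i + s : ℝ) : ℂ))) =
        diagonal (RCLike.ofReal ∘ hM.eigenvalues) + (s : ℂ) • (1 : Matrix n n ℂ) := by
      ext i j
      by_cases h : i = j
      · subst h
        simp only [diagonal_apply_eq, Matrix.add_apply, Matrix.smul_apply, Matrix.one_apply_eq,
          Function.comp_apply, smul_eq_mul, mul_one]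
        push_cast
        rfl
      · simp [h, Matrix.one_apply_ne h]
    have hsp := hM.spectral_theorem
    rw [Unitary.conjStarAlgAut_apply] at hsp
    rw [hd, Matrix.mul_add, Matrix.add_mul, ← star_eq_conjTranspose, ← hsp]
    congr 1
    rw [mul_smul_comm, smul_mul_assoc, mul_one, hU]
  rw [key]
  exact (posSemidef_diagonal_iff.mpr fun i =>
    Complex.zero_le_real.mpr (by linarith [hs i])).mul_mul_conjTranspose_same _

lemma rsmul {m n : Type*} (r : ℝ) (M : Matrix m n ℂ) : r • M = (r : ℂ) • M := by
  ext i j; simp [Complex.real_smul]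

end Helpers

theorem stmt_9 (dX dY : ℕ) (hdX : 0 < dX) (hdY : 0 < dY) :
    ∃ S : Submodule ℝ (Matrix (Fin dY × Fin dX) (Fin dY × Fin dX) ℂ),
      (S : Set (Matrix (Fin dY × Fin dX) (Fin dY × Fin dX) ℂ)) =
        {M | M.IsHermitian ∧ ∃ c : ℝ, ptraceY dX dY M = (c : ℂ) • 1} ∧
      Submodule.span ℝ {M : Matrix (Fin dY × Fin dX) (Fin dY × Fin dX) ℂ |
          M.PosSemidef ∧ ptraceY dX dY M = 1} = S ∧
      Module.finrank ℝ S = dX ^ 2 * dY ^ 2 - dX ^ 2 + 1 := by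
  classical
  set N := Fin dY × Fin dX with hN
  have hdYC : (dY : ℂ) ≠ 0 := Nat.cast_ne_zero.mpr hdY.ne'
  let ptrL : Matrix N N ℂ →ₗ[ℝ] Matrix (Fin dX) (Fin dX) ℂ :=
    { toFun := ptraceY dX dY
      map_add' := ptraceY_add
      map_smul' := fun r M => by
        simp only [RingHom.id_apply]
        rw [rsmul, rsmul, ptraceY_csmul] }
  have hpres : ∀ x ∈ hermSub N, ptrL x ∈ hermSub (Fin dX) := fun x hx => ptraceY_herm hx
  let pmap : hermSub N →ₗ[ℝ] hermSub (Fin dX) := ptrL.restrict hpres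
  let oneH : hermSub (Fin dX) := ⟨1, Matrix.isHermitian_one⟩
  let Lsp : Submodule ℝ (hermSub (Fin dX)) := Submodule.span ℝ {oneH}
  let ψ : hermSub N →ₗ[ℝ] (hermSub (Fin dX) ⧸ Lsp) := Lsp.mkQ.comp pmap
  have hchar : ∀ M : Matrix N N ℂ,
      M ∈ Submodule.map (hermSub N).subtype (LinearMap.ker ψ) ↔
      (M.IsHermitian ∧ ∃ c : ℝ, ptraceY dX dY M = (c : ℂ) • 1) := by
    intro M
    rw [Submodule.mem_map]
    constructor
    · rintro ⟨⟨M', hM'⟩, hker, rfl⟩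
      refine ⟨hM', ?_⟩
      have hk := LinearMap.mem_ker.mp hker
      rw [LinearMap.comp_apply, Submodule.mkQ_apply, Submodule.Quotient.mk_eq_zero] at hk
      obtain ⟨c, hc⟩ := Submodule.mem_span_singleton.mp hk
      refine ⟨c, ?_⟩
      have hval := congrArg Subtype.val hc
      simp only [SetLike.val_smul, LinearMap.restrict_apply, pmap, oneH] at hval
      rw [rsmul] at hval
      exact hval.symm
    · rintro ⟨hHerm, c, hc⟩
      refine ⟨⟨M, hHerm⟩, ?_, rfl⟩
      rw [LinearMap.mem_ker, LinearMap.comp_apply, Submodule.mkQ_apply,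
        Submodule.Quotient.mk_eq_zero]
      refine Submodule.mem_span_singleton.mpr ⟨c, Subtype.ext ?_⟩
      simp only [SetLike.val_smul, LinearMap.restrict_apply, pmap, oneH]
      rw [rsmul]
      exact hc.symm
  refine ⟨Submodule.map (hermSub N).subtype (LinearMap.ker ψ), ?_, ?_, ?_⟩
  · ext M
    rw [SetLike.mem_coe, hchar]
    rfl
  · -- span equality
    apply le_antisymm
    · rw [Submodule.span_le]
      rintro M ⟨hPSD, hpt⟩
      rw [SetLike.mem_coe, hchar]
      exact ⟨hPSD.1, 1, by rw [hpt]; simp⟩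
    · intro M hM
      obtain ⟨hHerm, c, hc⟩ := (hchar M).mp hM
      set ev := hHerm.eigenvalues with hev
      set s : ℝ := (∑ i, |ev i|) + |c| + 1 with hsdef
      have hsum : 0 ≤ ∑ i, |ev i| := Finset.sum_nonneg fun i _ => abs_nonneg _
      have hs0 : 0 < s := by have := abs_nonneg c; linarith
      have hs : ∀ i, -s ≤ ev i := by
        intro i
        have h1 : |ev i| ≤ ∑ j, |ev j| :=
          Finset.single_le_sum (f := fun j => |ev j|) (fun j _ => abs_nonneg _)
            (Finset.mem_univ i)
        have h2 := neg_abs_le (ev i)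
        have := abs_nonneg c
        linarith
      have hPSD1 : (M + (s : ℂ) • 1).PosSemidef := herm_shift_psd hHerm hs
      have hdY1 : (1 : ℝ) ≤ (dY : ℝ) := by exact_mod_cast hdY
      set a : ℝ := c + s * (dY : ℝ) with hadef
      have ha : 0 < a := by nlinarith [neg_abs_le c, abs_nonneg c]
      set C1 : Matrix N N ℂ := ((a⁻¹ : ℝ) : ℂ) • (M + (s : ℂ) • 1) with hC1
      set C0 : Matrix N N ℂ := (((dY : ℝ)⁻¹ : ℝ) : ℂ) • (1 : Matrix N N ℂ) with hC0
      have hC1mem : C1 ∈ {M : Matrix N N ℂ | M.PosSemidef ∧ ptraceY dX dY M = 1} := by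
        refine ⟨smul_psd hPSD1 (inv_nonneg.mpr ha.le), ?_⟩
        rw [hC1, ptraceY_csmul, ptraceY_add, hc, ptraceY_smul_one, ← add_smul, smul_smul]
        have hcoef : ((a⁻¹ : ℝ) : ℂ) * ((c : ℂ) + (dY : ℂ) * (s : ℂ)) = 1 := by
          have h1 : (c : ℂ) + (dY : ℂ) * (s : ℂ) = ((a : ℝ) : ℂ) := by
            rw [hadef]; push_cast; ring
          rw [h1, ← Complex.ofReal_mul, inv_mul_cancel₀ ha.ne', Complex.ofReal_one]
        rw [hcoef, one_smul]
      have hC0mem : C0 ∈ {M : Matrix N N ℂ | M.PosSemidef ∧ ptraceY dX dY M = 1} := by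
        refine ⟨smul_psd Matrix.PosSemidef.one (inv_nonneg.mpr (by positivity)), ?_⟩
        rw [hC0, ptraceY_smul_one]
        have hcoef : (dY : ℂ) * (((dY : ℝ)⁻¹ : ℝ) : ℂ) = 1 := by
          push_cast
          field_simp
        rw [hcoef, one_smul]
      have hmem1 : C1 ∈ Submodule.span ℝ
          {M : Matrix N N ℂ | M.PosSemidef ∧ ptraceY dX dY M = 1} :=
        Submodule.subset_span hC1mem
      have hmem0 : C0 ∈ Submodule.span ℝ
          {M : Matrix N N ℂ | M.PosSemidef ∧ ptraceY dX dY M = 1} :=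
        Submodule.subset_span hC0mem
      have key : M = a • C1 - (s * (dY : ℝ)) • C0 := by
        rw [hC1, hC0, rsmul, rsmul, smul_smul, smul_smul]
        have e1 : ((a : ℝ) : ℂ) * ((a⁻¹ : ℝ) : ℂ) = 1 := by
          rw [← Complex.ofReal_mul, mul_inv_cancel₀ ha.ne', Complex.ofReal_one]
        have e2 : ((s * (dY : ℝ) : ℝ) : ℂ) * (((dY : ℝ)⁻¹ : ℝ) : ℂ) = (s : ℂ) := by
          push_cast
          field_simp
        rw [e1, e2, one_smul]
        exact (add_sub_cancel_right M ((s : ℂ) • 1)).symm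
      rw [key]
      exact Submodule.sub_mem _ (Submodule.smul_mem _ a hmem1) (Submodule.smul_mem _ _ hmem0)
  · -- dimension
    have hsurj : Function.Surjective ψ := by
      apply Function.Surjective.comp (Submodule.mkQ_surjective Lsp)
      rintro ⟨A, hA⟩
      refine ⟨⟨of fun p q => if p.1 = q.1 then ((dY : ℂ))⁻¹ * A p.2 q.2 else 0, ?_⟩,
        Subtype.ext ?_⟩
      · have hA' : A.IsHermitian := hA
        ext p q
        simp only [conjTranspose_apply, of_apply]
        by_cases h : q.1 = p.1
        · rw [if_pos h, if_pos h.symm, star_mul', hA'.apply p.2 q.2]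
          congr 1
          simp
        · rw [if_neg h, if_neg (fun hh => h hh.symm)]
          simp
      · show ptraceY dX dY _ = A
        ext i j
        simp only [ptraceY, Submodule.subtype_apply, of_apply, if_pos rfl]
        rw [Finset.sum_const, Finset.card_univ, Fintype.card_fin, nsmul_eq_mul]
        field_simp
        exact mul_div_cancel₀ _ hdYC
    have h1 : Module.finrank ℝ (LinearMap.range ψ) + Module.finrank ℝ (LinearMap.ker ψ) =
        Module.finrank ℝ (hermSub N) := LinearMap.finrank_range_add_finrank_ker ψ
    rw [LinearMap.range_eq_top.mpr hsurj, finrank_top] at h1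
    have h2 := Submodule.finrank_quotient_add_finrank Lsp
    have hone : oneH ≠ 0 := by
      intro h
      have h' := congrArg (fun X : hermSub (Fin dX) =>
        (X : Matrix (Fin dX) (Fin dX) ℂ) ⟨0, hdX⟩ ⟨0, hdX⟩) h
      simpa [oneH, Matrix.one_apply] using h'
    have h3 : Module.finrank ℝ Lsp = 1 := finrank_span_singleton hone
    have h4 : Module.finrank ℝ (hermSub (Fin dX)) = dX ^ 2 := by
      rw [finrank_hermSub]; simp [sq]
    have h5 : Module.finrank ℝ (hermSub N) = dX ^ 2 * dY ^ 2 := by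
      rw [finrank_hermSub]
      simp only [hN, Fintype.card_prod, Fintype.card_fin]
      ring
    rw [Submodule.finrank_map_subtype_eq]
    have hle' : dX ^ 2 ≤ dX ^ 2 * dY ^ 2 :=
      Nat.le_mul_of_pos_right _ (pow_pos hdY 2)
    rw [h5] at h1
    rw [h3, h4] at h2
    generalize hR : dX ^ 2 * dY ^ 2 = R at h1 hle' ⊢
    generalize hP : dX ^ 2 = P at h2 hle' ⊢
    set k := finrank ℝ ↥(LinearMap.ker ψ) with hk
    set q := finrank ℝ (↥(hermSub (Fin dX)) ⧸ Lsp) with hq'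
    omega
end
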